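/- Let (f^* : A ⥤ B, g^* : C ⥤ D, h : A ⥤ C, k : B ⥤ D) together with right adjoints f_* of f^* and g_* of g^* and a natural isomorphism α : k ∘ f^* ≅ g^* ∘ h form a horizontally right adjointable square. If an object X of A is h-colocal, then f^* X is k-colocal. -/

import Mathlib

/-!
A horizontally right adjointable square consists of adjunctions `f^* ⊣ f_*` and `g^* ⊣ g_*`,
vertical functors `h`, `k`, and a natural isomorphism `α : k ∘ f^* ≅ g^* ∘ h` whose mate
`h ∘ f_* ⟶ g_* ∘ k` (given by `mateEquiv`) is a natural isomorphism.  If `X` is `h`-colocal,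
then `f^* X` is `k`-colocal.
-/

open CategoryTheory

universe v₁ v₂ v₃ v₄ u₁ u₂ u₃ u₄

/-- `X` is `F`-colocal if `F` induces a bijection `Hom(X, Y) → Hom(F X, F Y)` for all `Y`. -/
def Colocal {C : Type u₁} {D : Type u₂} [Category.{v₁} C] [Category.{v₂} D]
    (F : C ⥤ D) (X : C) : Prop :=
  ∀ Y : C, Function.Bijective (fun f : X ⟶ Y => F.map f)

theorem stmt5 {A : Type u₁} {B : Type u₂} {C : Type u₃} {D : Type u₄}
    [Category.{v₁} A] [Category.{v₂} B] [Category.{v₃} C] [Category.{v₄} D]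
    (fstar : A ⥤ B) (fpush : B ⥤ A) (adjf : fstar ⊣ fpush)
    (gstar : C ⥤ D) (gpush : D ⥤ C) (adjg : gstar ⊣ gpush)
    (h : A ⥤ C) (k : B ⥤ D) (α : fstar ⋙ k ≅ h ⋙ gstar)
    (hmate : IsIso (mateEquiv adjf adjg α.inv))
    (X : A) (hX : Colocal h X) :
    Colocal k (fstar.obj X) := by
  intro Y
  set μ := mateEquiv adjf adjg α.inv with hμ
  have key : (fun u : fstar.obj X ⟶ Y => k.map u) =
      (fun w : gstar.obj (h.obj X) ⟶ k.obj Y => α.hom.app X ≫ w) ∘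
        (adjg.homEquiv (h.obj X) (k.obj Y)).symm ∘
        (fun v : h.obj X ⟶ gpush.obj (k.obj Y) => v) ∘
        (fun v : h.obj X ⟶ h.obj (fpush.obj Y) => v ≫ μ.app Y) ∘
        (fun v : X ⟶ fpush.obj Y => h.map v) ∘
        (adjf.homEquiv X Y) := by
    funext u
    have hnat : h.map (fpush.map u) ≫ μ.app Y = μ.app (fstar.obj X) ≫ gpush.map (k.map u) :=
      μ.naturality u
    have hunit := unit_mateEquiv adjf adjg α.inv X
    rw [← hμ] at hunit
    simp only [Function.comp_apply, Adjunction.homEquiv_unit, Adjunction.homEquiv_counit]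
    dsimp
    rw [Functor.map_comp h, Category.assoc, hnat, ← Category.assoc (h.map (adjf.unit.app X)), hunit]
    simp
  rw [key]
  have p1 : Function.Bijective
      (fun v : h.obj X ⟶ h.obj (fpush.obj Y) => v ≫ μ.app Y) := by
    haveI : IsIso (μ.app Y) := NatIso.isIso_app_of_isIso (F := fpush ⋙ h) (G := k ⋙ gpush) (α := μ) Y
    constructor
    · intro a b hab
      have := congrArg (fun t => t ≫ inv (μ.app Y)) hab
      simpa using this
    · intro v
      exact ⟨v ≫ inv (μ.app Y), by simp⟩
  have p2 : Function.Bijective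
      (fun w : gstar.obj (h.obj X) ⟶ k.obj Y => α.hom.app X ≫ w) := by
    constructor
    · intro a b hab
      have := congrArg (fun t => α.inv.app X ≫ t) hab
      simpa using this
    · intro w
      exact ⟨α.inv.app X ≫ w, by simp⟩
  exact p2.comp ((adjg.homEquiv _ _).symm.bijective.comp
    (Function.bijective_id.comp (p1.comp ((hX (fpush.obj Y)).comp
      (adjf.homEquiv X Y).bijective))))
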